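/- (Yoshida's lemma) Let q > 1 be real, and let α, β ∈ ℂ satisfy αβ = q and α + β ∈ ℝ with |α + β| ≤ q + 1. Then for any w ∈ ℂ: if |w| < 1 then |w−α|·|w−β| > |1−αw|·|1−βw|, and if |w| > 1 then |w−α|·|w−β| < |1−αw|·|1−βw|. -/

import Mathlib

private lemma bracket_pos (q s u v : ℝ) (hq : 1 < q) (hs : |s| ≤ q + 1)
    (h : u^2 + v^2 ≠ 1) : 0 < (1+q)*(u^2+v^2+1) - 2*s*u := by
  obtain ⟨hs1, hs2⟩ := abs_le.mp hs
  rcases lt_or_gt_of_ne h with h | h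
  · rcases le_or_gt 0 u with hu | hu
    · have hu1 : u < 1 := by nlinarith [sq_nonneg v]
      nlinarith [mul_nonneg hu (by linarith : (0:ℝ) ≤ q+1-s),
        mul_pos (by linarith : (0:ℝ) < q+1) (pow_pos (by linarith : (0:ℝ) < 1-u) 2),
        sq_nonneg (1-u), sq_nonneg v]
    · have hu1 : -1 < u := by nlinarith [sq_nonneg v]
      nlinarith [mul_nonneg (by linarith : (0:ℝ) ≤ -u) (by linarith : (0:ℝ) ≤ q+1+s),
        sq_nonneg (1+u), sq_nonneg v]
  · rcases le_or_gt 0 u with hu | hu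
    · nlinarith [mul_nonneg hu (by linarith : (0:ℝ) ≤ q+1-s), sq_nonneg (1-u),
        sq_nonneg v, sq_nonneg (u^2+v^2-1), mul_nonneg (mul_nonneg hu hu) (sq_nonneg v)]
    · nlinarith [mul_nonneg (by linarith : (0:ℝ) ≤ -u) (by linarith : (0:ℝ) ≤ q+1+s),
        sq_nonneg (1+u), sq_nonneg v, sq_nonneg (u^2+v^2-1),
        mul_nonneg (mul_nonneg (by linarith : (0:ℝ) ≤ -u) (by linarith : (0:ℝ) ≤ -u))
          (sq_nonneg v)]

private lemma abs_lt_of_normSq_lt {x y : ℂ} (h : Complex.normSq x < Complex.normSq y) :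
    ‖x‖ < ‖y‖ := by
  rw [Complex.norm_def, Complex.norm_def]
  exact Real.sqrt_lt_sqrt (Complex.normSq_nonneg _) h

theorem stmt_1 (q : ℝ) (hq : 1 < q) (α β : ℂ) (hprod : α * β = (q : ℂ))
    (hre : (α + β).im = 0) (hsum : ‖α + β‖ ≤ q + 1) (w : ℂ) :
    (‖w‖ < 1 →
      ‖w - α‖ * ‖w - β‖ >
        ‖1 - α * w‖ * ‖1 - β * w‖) ∧
    (‖w‖ > 1 →
      ‖w - α‖ * ‖w - β‖ <
        ‖1 - α * w‖ * ‖1 - β * w‖) := by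
  set s : ℝ := (α + β).re with hsdef
  have hs : α + β = (s : ℂ) := by
    apply Complex.ext
    · simp [hsdef]
    · simp [hre]
  have habs : |s| ≤ q + 1 := by
    have := hsum
    rw [hs, Complex.norm_real, Real.norm_eq_abs] at this
    exact this
  have h1 : (w - α) * (w - β) = w^2 - (s:ℂ)*w + (q:ℂ) := by
    have : (w - α) * (w - β) = w^2 - (α + β)*w + α*β := by ring
    rw [this, hprod, hs]
  have h2 : (1 - α*w) * (1 - β*w) = 1 - (s:ℂ)*w + (q:ℂ)*w^2 := by
    have : (1 - α*w) * (1 - β*w) = 1 - (α + β)*w + (α*β)*w^2 := by ring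
    rw [this, hprod, hs]
  have key : Complex.normSq ((w - α) * (w - β)) - Complex.normSq ((1 - α*w) * (1 - β*w))
      = (1-q)*(Complex.normSq w - 1)*((1+q)*(Complex.normSq w + 1) - 2*s*w.re) := by
    rw [h1, h2]
    simp only [Complex.normSq_apply, Complex.add_re, Complex.add_im, Complex.sub_re,
      Complex.sub_im, Complex.mul_re, Complex.mul_im, Complex.ofReal_re, Complex.ofReal_im,
      Complex.one_re, Complex.one_im, pow_two]
    ring
  have hnsq : Complex.normSq w = w.re^2 + w.im^2 := by
    rw [Complex.normSq_apply]; ring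
  constructor
  · intro hw
    have hlt : Complex.normSq w < 1 := by
      rw [← Complex.sq_norm]
      nlinarith [norm_nonneg w]
    have hne : w.re^2 + w.im^2 ≠ 1 := by rw [← hnsq]; exact ne_of_lt hlt
    have hbr := bracket_pos q s w.re w.im hq habs hne
    rw [← hnsq] at hbr
    have hpos : 0 < Complex.normSq ((w - α) * (w - β))
        - Complex.normSq ((1 - α*w) * (1 - β*w)) := by
      rw [key]
      have : 0 < (1-q)*(Complex.normSq w - 1) := by nlinarith
      positivity
    have := abs_lt_of_normSq_lt (show Complex.normSq ((1 - α*w) * (1 - β*w))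
        < Complex.normSq ((w - α) * (w - β)) by linarith)
    rw [norm_mul, norm_mul] at this
    exact this
  · intro hw
    have hlt : 1 < Complex.normSq w := by
      rw [← Complex.sq_norm]
      nlinarith [norm_nonneg w]
    have hne : w.re^2 + w.im^2 ≠ 1 := by rw [← hnsq]; exact (ne_of_lt hlt).symm
    have hbr := bracket_pos q s w.re w.im hq habs hne
    rw [← hnsq] at hbr
    have hpos : Complex.normSq ((w - α) * (w - β))
        - Complex.normSq ((1 - α*w) * (1 - β*w)) < 0 := by
      rw [key]
      have h3 : (1-q)*(Complex.normSq w - 1) < 0 := by nlinarith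
      exact mul_neg_of_neg_of_pos h3 hbr
    have := abs_lt_of_normSq_lt (show Complex.normSq ((w - α) * (w - β))
        < Complex.normSq ((1 - α*w) * (1 - β*w)) by linarith)
    rw [norm_mul, norm_mul] at this
    exact this
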